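/- Let R be an h-local domain and let Λ be an associative unital R-algebra. Let M be a Λ-module that is torsion as an R-module (every element of M is annihilated by some nonzero element of R). Then the canonical Λ-linear map from M to the product of all localizations M_𝔪 over the maximal ideals 𝔪 of R, given componentwise by the localization maps, takes values in the direct sum ⊕_𝔪 M_𝔪 and induces a Λ-module isomorphism M ≅ ⊕_{𝔪 maximal} M_𝔪. -/

import Mathlib

open scoped TensorProduct DirectSum

universe u

namespace Stmt10Aux

open TensorProduct

variable {R : Type u} [CommRing R] [IsDomain R]
variable {M : Type u} [AddCommGroup M] [Module R M]

lemma one_not_mem (𝔪 : MaximalSpectrum R) : (1 : R) ∉ 𝔪.asIdeal :=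
  (Ideal.ne_top_iff_one _).mp 𝔪.isMaximal.ne_top

/-- Key consequence of h-locality: for a nonzero ideal `I` and distinct maximal ideals
`𝔪 ≠ 𝔫`, there are `s ∉ 𝔪`, `t ∉ 𝔫` with `s * t ∈ I`. -/
lemma exists_mul_mem
    (hhl : ∀ p : Ideal R, p.IsPrime → p ≠ ⊥ → ∃! 𝔪 : Ideal R, 𝔪.IsMaximal ∧ p ≤ 𝔪)
    (I : Ideal R) (hI : I ≠ ⊥) (𝔪 𝔫 : MaximalSpectrum R) (hne : 𝔪 ≠ 𝔫) :
    ∃ s t : R, s ∉ 𝔪.asIdeal ∧ t ∉ 𝔫.asIdeal ∧ s * t ∈ I := by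
  by_contra hcon
  push_neg at hcon
  set S : Submonoid R :=
    { carrier := {x | ∃ s t : R, s ∉ 𝔪.asIdeal ∧ t ∉ 𝔫.asIdeal ∧ x = s * t}
      one_mem' := ⟨1, 1, one_not_mem 𝔪, one_not_mem 𝔫, (one_mul 1).symm⟩
      mul_mem' := by
        rintro x y ⟨s, t, hs, ht, rfl⟩ ⟨s', t', hs', ht', rfl⟩
        have he : s * t * (s' * t') = s * s' * (t * t') := by ring
        exact ⟨s * s', t * t',
          fun h => ((𝔪.isMaximal.isPrime.mem_or_mem h).elim hs hs'),
          fun h => ((𝔫.isMaximal.isPrime.mem_or_mem h).elim ht ht'), he⟩ }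
  have hdisj : Disjoint (I : Set R) (S : Set R) := by
    rw [Set.disjoint_left]
    rintro x hx ⟨s, t, hs, ht, rfl⟩
    exact hcon s t hs ht hx
  obtain ⟨p, hp, hIp, hpS⟩ := Ideal.exists_le_prime_disjoint I S hdisj
  have hp𝔪 : p ≤ 𝔪.asIdeal := by
    intro x hx
    by_contra hx𝔪
    exact (Set.disjoint_left.mp hpS hx) ⟨x, 1, hx𝔪, one_not_mem 𝔫, (mul_one x).symm⟩
  have hp𝔫 : p ≤ 𝔫.asIdeal := by
    intro x hx
    by_contra hx𝔫
    exact (Set.disjoint_left.mp hpS hx) ⟨1, x, one_not_mem 𝔪, hx𝔫, (one_mul x).symm⟩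
  have hpbot : p ≠ ⊥ := by
    rintro rfl
    exact hI (le_bot_iff.mp hIp)
  obtain ⟨q, _, hq⟩ := hhl p hp hpbot
  exact hne (MaximalSpectrum.ext ((hq _ ⟨𝔪.isMaximal, hp𝔪⟩).trans
    (hq _ ⟨𝔫.isMaximal, hp𝔫⟩).symm))

/-- The submodule of elements supported (as far as localizations are concerned) only at `𝔪`. -/
def locComp (M : Type u) [AddCommGroup M] [Module R M] (𝔪 : MaximalSpectrum R) :
    Submodule R M where
  carrier := {m | ∀ 𝔫 : MaximalSpectrum R, 𝔫 ≠ 𝔪 → ∃ s ∉ 𝔫.asIdeal, s • m = 0}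
  zero_mem' := fun 𝔫 _ => ⟨1, one_not_mem 𝔫, smul_zero 1⟩
  add_mem' := by
    intro a b ha hb 𝔫 h𝔫
    obtain ⟨s, hs, hs0⟩ := ha 𝔫 h𝔫
    obtain ⟨t, ht, ht0⟩ := hb 𝔫 h𝔫
    refine ⟨s * t, fun h => ?_, ?_⟩
    · rcases 𝔫.isMaximal.isPrime.mem_or_mem h with h' | h' <;> [exact hs h'; exact ht h']
    · rw [smul_add]
      rw [show s * t = t * s from mul_comm s t, mul_smul, hs0, smul_zero, ← mul_comm s t,
        mul_smul, ht0, smul_zero, add_zero]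
  smul_mem' := by
    intro c m hm 𝔫 h𝔫
    obtain ⟨s, hs, hs0⟩ := hm 𝔫 h𝔫
    exact ⟨s, hs, by rw [smul_comm, hs0, smul_zero]⟩

lemma mem_locComp {𝔪 : MaximalSpectrum R} {m : M} :
    m ∈ locComp M 𝔪 ↔ ∀ 𝔫 : MaximalSpectrum R, 𝔫 ≠ 𝔪 → ∃ s ∉ 𝔫.asIdeal, s • m = 0 :=
  Iff.rfl

/-- Elements of `R` outside `𝔪` act surjectively on `locComp M 𝔪`. -/
lemma locComp_smul_surj (𝔪 : MaximalSpectrum R) (s : R) (hs : s ∉ 𝔪.asIdeal)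
    {x : M} (hx : x ∈ locComp M 𝔪) : ∃ y ∈ locComp M 𝔪, s • y = x := by
  set A : Ideal R := (⊥ : Submodule R M).colon (Submodule.span R {x}) with hA
  have hJ : A ⊔ Ideal.span {s} = ⊤ := by
    by_contra h
    obtain ⟨𝔪', hmax, hle⟩ := Ideal.exists_le_maximal _ h
    have hs' : s ∈ 𝔪' := hle (le_sup_right (α := Ideal R)
      (Ideal.mem_span_singleton_self s))
    have hne : (⟨𝔪', hmax⟩ : MaximalSpectrum R) ≠ 𝔪 := by
      rintro rfl
      exact hs hs'
    obtain ⟨u, hu, hu0⟩ := hx ⟨𝔪', hmax⟩ hne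
    refine hu (hle (le_sup_left (α := Ideal R) ?_))
    exact Submodule.mem_colon_span_singleton.mpr (by rw [hu0]; exact Submodule.zero_mem _)
  have h1 : (1 : R) ∈ A ⊔ Ideal.span {s} := hJ ▸ Submodule.mem_top
  obtain ⟨a, ha, b, hb, hab⟩ := Submodule.mem_sup.mp h1
  obtain ⟨c, rfl⟩ := Ideal.mem_span_singleton'.mp hb
  refine ⟨c • x, Submodule.smul_mem _ _ hx, ?_⟩
  have ha' : a • x = 0 := by
    simpa using Submodule.mem_colon_span_singleton.mp ha
  have hcs : c * s = 1 - a := by linear_combination hab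
  rw [smul_smul, mul_comm s c, hcs, sub_smul, one_smul, ha', sub_zero]

/-- Every torsion element lies in the sum of the `locComp` submodules. -/
lemma mem_iSup_locComp
    (hfc : ∀ r : R, r ≠ 0 → {𝔪 : MaximalSpectrum R | r ∈ 𝔪.asIdeal}.Finite)
    (hhl : ∀ p : Ideal R, p.IsPrime → p ≠ ⊥ → ∃! 𝔪 : Ideal R, 𝔪.IsMaximal ∧ p ≤ 𝔪)
    {m : M} (r : R) (hr : r ≠ 0) (hrm : r • m = 0) :
    m ∈ ⨆ 𝔫 : MaximalSpectrum R, locComp M 𝔫 := by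
  classical
  set T : Finset (MaximalSpectrum R) := (hfc r hr).toFinset with hT
  have hrspan : Ideal.span {r} ≠ ⊥ := by
    simpa [Ideal.span_singleton_eq_bot] using hr
  have hL : ∀ 𝔪 𝔫 : MaximalSpectrum R, ∃ s t : R,
      𝔪 ≠ 𝔫 → s ∉ 𝔪.asIdeal ∧ t ∉ 𝔫.asIdeal ∧ s * t ∈ Ideal.span {r} := by
    intro 𝔪 𝔫
    by_cases h : 𝔪 = 𝔫
    · exact ⟨1, 1, fun h' => absurd h h'⟩
    · obtain ⟨s, t, h1, h2, h3⟩ := exists_mul_mem hhl (Ideal.span {r}) hrspan 𝔪 𝔫 h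
      exact ⟨s, t, fun _ => ⟨h1, h2, h3⟩⟩
  choose sf tf hst using hL
  set Q : Ideal R := (⨆ 𝔫 : MaximalSpectrum R, locComp M 𝔫).colon (Submodule.span R {m})
    with hQ
  have hQtop : Q = ⊤ := by
    by_contra h
    obtain ⟨𝔪₀, hmax, hle⟩ := Ideal.exists_le_maximal _ h
    have hrQ : r ∈ Q := Submodule.mem_colon_span_singleton.mpr
      (by rw [hrm]; exact Submodule.zero_mem _)
    set 𝔪' : MaximalSpectrum R := ⟨𝔪₀, hmax⟩ with h𝔪'
    have h𝔪₀T : 𝔪' ∈ T := by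
      rw [hT, Set.Finite.mem_toFinset]
      exact hle hrQ
    set rk : R := ∏ 𝔫 ∈ T.erase 𝔪', sf 𝔪' 𝔫 with hrk
    have hrkQ : rk ∈ Q := by
      apply Submodule.mem_colon_span_singleton.mpr
      apply Submodule.mem_iSup_of_mem 𝔪'
      intro 𝔫' hne'
      by_cases hTmem : 𝔫' ∈ T
      · have hmem : 𝔫' ∈ T.erase 𝔪' := Finset.mem_erase.mpr ⟨hne', hTmem⟩
        have hne2 : 𝔪' ≠ 𝔫' := fun e => hne' e.symm
        obtain ⟨h1, h2, h3⟩ := hst 𝔪' 𝔫' hne2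
        obtain ⟨c, hc⟩ := Ideal.mem_span_singleton'.mp h3
        refine ⟨tf 𝔪' 𝔫', h2, ?_⟩
        have hsplit : rk = sf 𝔪' 𝔫' * ∏ 𝔫 ∈ (T.erase 𝔪').erase 𝔫', sf 𝔪' 𝔫 :=
          (Finset.mul_prod_erase _ _ hmem).symm
        set rest : R := ∏ 𝔫 ∈ (T.erase 𝔪').erase 𝔫', sf 𝔪' 𝔫 with hrest
        have hcalc : tf 𝔪' 𝔫' * rk = (c * rest) * r := by
          rw [hsplit]
          linear_combination (-rest) * hc
        rw [smul_smul, hcalc, mul_smul, hrm, smul_zero]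
      · refine ⟨r, fun hrmem => hTmem (by rw [hT, Set.Finite.mem_toFinset]; exact hrmem), ?_⟩
        rw [smul_smul, mul_comm, mul_smul, hrm, smul_zero]
    have hrk𝔪₀ : rk ∉ 𝔪₀ := by
      intro hmem
      haveI : 𝔪₀.IsPrime := hmax.isPrime
      obtain ⟨𝔫, h𝔫, hsf⟩ := Ideal.IsPrime.prod_mem_iff.mp hmem
      have hne2 : 𝔪' ≠ 𝔫 := fun e => (Finset.mem_erase.mp h𝔫).1 e.symm
      exact (hst 𝔪' 𝔫 hne2).1 hsf
    exact hrk𝔪₀ (hle hrkQ)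
  have h1 : (1 : R) ∈ Q := hQtop ▸ Submodule.mem_top
  simpa using Submodule.mem_colon_span_singleton.mp h1

/-- The canonical map `M → M ⊗[R] Localization.AtPrime 𝔪`. -/
noncomputable def psi (𝔪 : MaximalSpectrum R) :
    M →ₗ[R] M ⊗[R] Localization.AtPrime 𝔪.asIdeal :=
  (TensorProduct.mk R M (Localization.AtPrime 𝔪.asIdeal)).flip 1

@[simp] lemma psi_apply (𝔪 : MaximalSpectrum R) (m : M) :
    psi 𝔪 m = m ⊗ₜ[R] (1 : Localization.AtPrime 𝔪.asIdeal) := rfl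

lemma isLocalizedModule_psi (𝔪 : MaximalSpectrum R) :
    IsLocalizedModule 𝔪.asIdeal.primeCompl (psi (M := M) 𝔪) := by
  haveI h1 : IsLocalizedModule 𝔪.asIdeal.primeCompl
      (TensorProduct.mk R (Localization.AtPrime 𝔪.asIdeal) M 1) :=
    (isLocalizedModule_iff_isBaseChange 𝔪.asIdeal.primeCompl
      (Localization.AtPrime 𝔪.asIdeal) _).mpr
      (TensorProduct.isBaseChange R M (Localization.AtPrime 𝔪.asIdeal))
  have heq : psi (M := M) 𝔪 =
      (TensorProduct.comm R (Localization.AtPrime 𝔪.asIdeal) M).toLinearMap ∘ₗ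
        TensorProduct.mk R (Localization.AtPrime 𝔪.asIdeal) M 1 := by
    ext m
    simp [psi]
  rw [heq]
  exact IsLocalizedModule.of_linearEquiv _ _ _

lemma tmul_one_eq_zero_iff (𝔪 : MaximalSpectrum R) (m : M) :
    m ⊗ₜ[R] (1 : Localization.AtPrime 𝔪.asIdeal) = 0 ↔
      ∃ s : R, s ∉ 𝔪.asIdeal ∧ s • m = 0 := by
  haveI := isLocalizedModule_psi (M := M) 𝔪
  have := IsLocalizedModule.eq_zero_iff 𝔪.asIdeal.primeCompl (psi (M := M) 𝔪) (m := m)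
  rw [psi_apply] at this
  rw [this]
  constructor
  · rintro ⟨⟨s, hs⟩, h⟩
    exact ⟨s, hs, h⟩
  · rintro ⟨s, hs, h⟩
    exact ⟨⟨s, hs⟩, h⟩

end Stmt10Aux

open Stmt10Aux TensorProduct

/-- Let `R` be an `h`-local domain (finite character, and every nonzero
prime ideal is contained in a unique maximal ideal) and `Λ` an `R`-algebra.  Let `M` be a
`Λ`-module which is torsion as an `R`-module.  Then the canonical map, given componentwise
by the localization maps `m ↦ m ⊗ 1`, induces a `Λ`-module isomorphism
`M ≅ ⊕_{𝔪 maximal} M_𝔪`. -/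
theorem stmt10 (R : Type u) [CommRing R] [IsDomain R]
    (hfc : ∀ r : R, r ≠ 0 → {𝔪 : MaximalSpectrum R | r ∈ 𝔪.asIdeal}.Finite)
    (hhl : ∀ p : Ideal R, p.IsPrime → p ≠ ⊥ → ∃! 𝔪 : Ideal R, 𝔪.IsMaximal ∧ p ≤ 𝔪)
    (Λ : Type u) [Ring Λ] [Algebra R Λ]
    (M : Type u) [AddCommGroup M] [Module R M] [Module Λ M] [IsScalarTower R Λ M]
    (htor : ∀ m : M, ∃ r : R, r ≠ 0 ∧ r • m = 0) :
    ∃ e : M ≃ₗ[Λ] (⨁ 𝔪 : MaximalSpectrum R, M ⊗[R] Localization.AtPrime 𝔪.asIdeal),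
      ∀ (m : M) (𝔪 : MaximalSpectrum R), e m 𝔪 = m ⊗ₜ[R] 1 := by
  classical
  choose rfun hr0 hrm using htor
  -- the underlying function into the direct sum
  set f0 : M → ⨁ 𝔪 : MaximalSpectrum R, M ⊗[R] Localization.AtPrime 𝔪.asIdeal :=
    fun m => DFinsupp.mk ((hfc (rfun m) (hr0 m)).toFinset)
      (fun 𝔪 => m ⊗ₜ[R] (1 : Localization.AtPrime (𝔪 : MaximalSpectrum R).asIdeal))
    with hf0
  have hcomp : ∀ (m : M) (𝔪 : MaximalSpectrum R),
      f0 m 𝔪 = m ⊗ₜ[R] (1 : Localization.AtPrime 𝔪.asIdeal) := by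
    intro m 𝔪
    rw [hf0]
    rw [DFinsupp.mk_apply]
    split
    · rfl
    · next h =>
      have hr𝔪 : rfun m ∉ 𝔪.asIdeal := by
        intro hmem
        exact h (by rw [Set.Finite.mem_toFinset]; exact hmem)
      exact ((tmul_one_eq_zero_iff 𝔪 m).mpr ⟨rfun m, hr𝔪, hrm m⟩).symm
  set f : M →ₗ[Λ] ⨁ 𝔪 : MaximalSpectrum R, M ⊗[R] Localization.AtPrime 𝔪.asIdeal :=
    { toFun := f0
      map_add' := by
        intro a b
        refine DFinsupp.ext fun 𝔪 => ?_
        rw [DFinsupp.add_apply, hcomp, hcomp, hcomp, TensorProduct.add_tmul]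
      map_smul' := by
        intro lam a
        refine DFinsupp.ext fun 𝔪 => ?_
        rw [RingHom.id_apply, DFinsupp.smul_apply, hcomp, hcomp, TensorProduct.smul_tmul'] }
    with hf
  have hfapp : ∀ m, f m = f0 m := fun _ => rfl
  -- injectivity
  have hker : ∀ m : M, f m = 0 → m = 0 := by
    intro m hm
    by_contra hm0
    have hAne : ((⊥ : Submodule R M).colon (Submodule.span R {m})) ≠ ⊤ := by
      intro htop
      have h1 : (1 : R) ∈ (⊥ : Submodule R M).colon (Submodule.span R {m}) :=
        htop ▸ Submodule.mem_top
      exact hm0 (by simpa using Submodule.mem_colon_span_singleton.mp h1)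
    obtain ⟨𝔪₀, hmax, hle⟩ := Ideal.exists_le_maximal _ hAne
    have hz : m ⊗ₜ[R] (1 : Localization.AtPrime 𝔪₀) = 0 := by
      have := congrArg (fun x => x (⟨𝔪₀, hmax⟩ : MaximalSpectrum R)) hm
      simpa [hfapp, hcomp] using this
    obtain ⟨s, hs, hs0⟩ := (tmul_one_eq_zero_iff ⟨𝔪₀, hmax⟩ m).mp hz
    exact hs (hle (Submodule.mem_colon_span_singleton.mpr
      (by rw [hs0]; exact Submodule.zero_mem _)))
  have hinj : Function.Injective f := by
    intro a b hab
    have : f (a - b) = 0 := by rw [map_sub, hab, sub_self]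
    have := hker _ this
    exact sub_eq_zero.mp this
  -- surjectivity
  have hsurj : Function.Surjective f := by
    intro x
    induction x using DirectSum.induction_on with
    | zero => exact ⟨0, map_zero f⟩
    | add x y hx hy =>
      obtain ⟨a, ha⟩ := hx
      obtain ⟨b, hb⟩ := hy
      exact ⟨a + b, by rw [map_add, ha, hb]⟩
    | of 𝔪 y =>
      haveI := isLocalizedModule_psi (M := M) 𝔪
      obtain ⟨⟨m, s⟩, hs⟩ := IsLocalizedModule.surj 𝔪.asIdeal.primeCompl (psi (M := M) 𝔪) y
      have hm : m ∈ ⨆ 𝔫 : MaximalSpectrum R, locComp M 𝔫 :=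
        mem_iSup_locComp hfc hhl (rfun m) (hr0 m) (hrm m)
      have hrep : ∃ m' ∈ locComp M 𝔪,
          (m ⊗ₜ[R] (1 : Localization.AtPrime 𝔪.asIdeal)) = m' ⊗ₜ[R] 1 := by
        refine Submodule.iSup_induction (motive := fun z =>
          ∃ m' ∈ locComp M 𝔪,
            (z ⊗ₜ[R] (1 : Localization.AtPrime 𝔪.asIdeal)) = m' ⊗ₜ[R] 1)
          _ hm ?_ ?_ ?_
        · intro 𝔫 z hz
          by_cases h : 𝔫 = 𝔪
          · subst h
            exact ⟨z, hz, rfl⟩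
          · obtain ⟨u, hu, hu0⟩ := hz 𝔪 (fun e => h e.symm)
            refine ⟨0, Submodule.zero_mem _, ?_⟩
            rw [TensorProduct.zero_tmul]
            exact (tmul_one_eq_zero_iff 𝔪 z).mpr ⟨u, hu, hu0⟩
        · exact ⟨0, Submodule.zero_mem _, rfl⟩
        · rintro x y ⟨x', hx', hx''⟩ ⟨y', hy', hy''⟩
          exact ⟨x' + y', Submodule.add_mem _ hx' hy',
            by rw [TensorProduct.add_tmul, TensorProduct.add_tmul, hx'', hy'']⟩
      obtain ⟨m', hm', heq⟩ := hrep
      obtain ⟨m₀, hm₀, hsm₀⟩ := locComp_smul_surj 𝔪 (s : R) s.2 hm'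
      -- show that psi 𝔪 m₀ = y
      have hcancel : (s : R) • (psi (M := M) 𝔪 m₀) = (s : R) • y := by
        rw [← map_smul, hsm₀, psi_apply, ← heq, ← psi_apply, ← hs, Submonoid.smul_def]
      have hyeq : psi (M := M) 𝔪 m₀ = y := by
        have hu := (Module.End.isUnit_iff _).mp
          (IsLocalizedModule.map_units (psi (M := M) 𝔪) s)
        apply hu.injective
        simpa only [Module.algebraMap_end_apply] using hcancel
      refine ⟨m₀, ?_⟩
      refine DFinsupp.ext fun 𝔫 => ?_
      rw [hfapp, hcomp]
      by_cases h : 𝔫 = 𝔪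
      · subst h
        rw [DirectSum.of_eq_same]
        rw [← hyeq, psi_apply]
      · rw [DirectSum.of_eq_of_ne _ _ _ h]
        obtain ⟨u, hu, hu0⟩ := hm₀ 𝔫 h
        exact (tmul_one_eq_zero_iff 𝔫 m₀).mpr ⟨u, hu, hu0⟩
  refine ⟨LinearEquiv.ofBijective f ⟨hinj, hsurj⟩, fun m 𝔪 => ?_⟩
  show f m 𝔪 = _
  rw [hfapp, hcomp]
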